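/- The Lie algebra u(n) of skew-Hermitian n×n matrices is spanned, as a real vector space, by the skew-symmetric real matrices o(n) together with the orbit under the adjoint action of O(n) of the Lie algebra of U(1) = {diag(z,1,...,1)}. -/

import Mathlib

open Matrix Complex

lemma mapc_mul {m : Type*} [Fintype m] [DecidableEq m] (M N : Matrix m m ℝ) :
    (M * N).map (fun a => (a : ℂ)) = M.map (fun a => (a : ℂ)) * N.map (fun a => (a : ℂ)) := by
  ext i j
  simp [Matrix.mul_apply]

lemma perm_mem_orth (n : ℕ) (σ : Equiv.Perm (Fin (n+1))) :
    σ.permMatrix ℝ ∈ Matrix.orthogonalGroup (Fin (n+1)) ℝ := by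
  rw [Matrix.mem_unitaryGroup_iff]
  have h1 : star (σ.permMatrix ℝ) = (σ.permMatrix ℝ)ᵀ := by
    ext i j; simp [Matrix.star_apply]
  rw [h1, ← PEquiv.toMatrix_symm, ← Equiv.toPEquiv_symm, ← PEquiv.toMatrix_trans,
    ← Equiv.toPEquiv_trans]
  simp

lemma real_orth_mul_transpose (n : ℕ) (g : Matrix (Fin (n+1)) (Fin (n+1)) ℝ)
    (hg : g ∈ Matrix.orthogonalGroup (Fin (n+1)) ℝ) : g * gᵀ = 1 := by
  have := Matrix.mem_unitaryGroup_iff.mp hg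
  rwa [show star g = gᵀ by ext i j; simp [Matrix.star_apply]] at this

lemma ofReal_inv_eq (n : ℕ) (g : Matrix (Fin (n+1)) (Fin (n+1)) ℝ)
    (hg : g ∈ Matrix.orthogonalGroup (Fin (n+1)) ℝ) :
    (g.map (fun a => (a : ℂ)))⁻¹ = (g.map (fun a => (a : ℂ)))ᵀ := by
  apply Matrix.inv_eq_right_inv
  have := congrArg (fun M => M.map (fun a : ℝ => (a : ℂ))) (real_orth_mul_transpose n g hg)
  simp only [mapc_mul] at this
  rw [Matrix.transpose_map] at this
  rw [this]
  ext i j; by_cases h : i = j <;> simp [h, Matrix.one_apply]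

lemma orbit_elt_eq (n : ℕ) (g : Matrix (Fin (n+1)) (Fin (n+1)) ℝ)
    (hg : g ∈ Matrix.orthogonalGroup (Fin (n+1)) ℝ) (t : ℝ) :
    (g.map (fun a => (a : ℂ))) *
      Matrix.diagonal (fun i => if i = 0 then (t : ℂ) * I else 0) *
      (g.map (fun a => (a : ℂ)))⁻¹ =
    Matrix.of (fun i m => (t : ℂ) * I * (g i 0) * (g m 0)) := by
  rw [ofReal_inv_eq n g hg]
  ext i m
  rw [Matrix.mul_apply]
  simp only [Matrix.mul_diagonal, Matrix.transpose_apply, Matrix.map_apply, Matrix.of_apply]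
  rw [Finset.sum_eq_single (0 : Fin (n+1))]
  · rw [if_pos rfl]; ring
  · intro b _ hb; simp [hb]
  · simp

/-- The Lie algebra `u(n)` of skew-Hermitian `n×n` matrices is spanned, as a real vector
space, by the real skew-symmetric matrices `o(n)` together with the orbit under the adjoint
action of `O(n)` of the Lie algebra `{diag(it,0,…,0) : t ∈ ℝ}` of the embedded `U(1)`. -/
theorem skewHermitian_spanned_by_skewSymmetric_and_adjoint_orbit (n : ℕ) :
    (Submodule.span ℝ
      ({X : Matrix (Fin (n + 1)) (Fin (n + 1)) ℂ |
          (∀ i j, (X i j).im = 0) ∧ Xᵀ = -X} ∪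
       {X : Matrix (Fin (n + 1)) (Fin (n + 1)) ℂ |
          ∃ g : Matrix (Fin (n + 1)) (Fin (n + 1)) ℝ, g ∈ Matrix.orthogonalGroup (Fin (n + 1)) ℝ ∧
            ∃ t : ℝ, X = (g.map (fun a => (a : ℂ))) *
              Matrix.diagonal (fun i => if i = 0 then (t : ℂ) * I else 0) *
              (g.map (fun a => (a : ℂ)))⁻¹}) : Set (Matrix (Fin (n + 1)) (Fin (n + 1)) ℂ)) =
    {X : Matrix (Fin (n + 1)) (Fin (n + 1)) ℂ | Xᴴ = -X} := by
  set S₁ : Set (Matrix (Fin (n + 1)) (Fin (n + 1)) ℂ) :=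
    {X | (∀ i j, (X i j).im = 0) ∧ Xᵀ = -X} with hS₁
  set S₂ : Set (Matrix (Fin (n + 1)) (Fin (n + 1)) ℂ) :=
    {X | ∃ g : Matrix (Fin (n + 1)) (Fin (n + 1)) ℝ, g ∈ Matrix.orthogonalGroup (Fin (n + 1)) ℝ ∧
      ∃ t : ℝ, X = (g.map (fun a => (a : ℂ))) *
        Matrix.diagonal (fun i => if i = 0 then (t : ℂ) * I else 0) *
        (g.map (fun a => (a : ℂ)))⁻¹} with hS₂
  -- The target as a submodule
  let W : Submodule ℝ (Matrix (Fin (n + 1)) (Fin (n + 1)) ℂ) :=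
    { carrier := {X | Xᴴ = -X}
      add_mem' := by
        intro a b ha hb
        simp only [Set.mem_setOf_eq] at *
        rw [Matrix.conjTranspose_add, ha, hb, neg_add]
      zero_mem' := by simp
      smul_mem' := by
        intro c x hx
        simp only [Set.mem_setOf_eq] at *
        rw [Matrix.conjTranspose_smul, hx, star_trivial, smul_neg] }
  apply Set.Subset.antisymm
  · -- span ⊆ skew-Hermitian
    have hle : Submodule.span ℝ (S₁ ∪ S₂) ≤ W := by
      rw [Submodule.span_le]
      rintro X (⟨hre, hskew⟩ | ⟨g, hg, t, rfl⟩)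
      · show Xᴴ = -X
        ext i j
        have h1 : X j i = -X i j := by
          have := congrFun (congrFun hskew i) j
          simpa using this
        have h2 : (starRingEnd ℂ) (X j i) = X j i :=
          Complex.conj_eq_iff_im.mpr (hre j i)
        simp [Matrix.conjTranspose_apply, h2, h1,
          Complex.conj_eq_iff_im.mpr (hre i j)]
      · show _ᴴ = -_
        rw [orbit_elt_eq n g hg t]
        ext i j
        simp only [Matrix.conjTranspose_apply, Matrix.of_apply, Matrix.neg_apply,
          Complex.star_def, _root_.map_mul, Complex.conj_ofReal, Complex.conj_I]
        ring
    exact fun x hx => hle hx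
  · -- skew-Hermitian ⊆ span
    intro X hX
    simp only [Set.mem_setOf_eq] at hX
    have hent : ∀ i j, (starRingEnd ℂ) (X j i) = -X i j := by
      intro i j
      have := congrFun (congrFun hX i) j
      simpa [Matrix.conjTranspose_apply] using this
    have hre : ∀ i j, (X j i).re = -(X i j).re := by
      intro i j
      have := congrArg Complex.re (hent i j)
      simpa using this
    have him : ∀ i j, (X j i).im = (X i j).im := by
      intro i j
      have := congrArg Complex.im (hent i j)
      simpa using this
    set B : Matrix (Fin (n+1)) (Fin (n+1)) ℝ := Matrix.of fun i j => (X i j).im with hB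
    have hBherm : B.IsHermitian := by
      ext i j
      simp only [Matrix.conjTranspose_apply, star_trivial, hB, Matrix.of_apply]
      exact him i j
    set U : Matrix (Fin (n+1)) (Fin (n+1)) ℝ :=
      (hBherm.eigenvectorUnitary : Matrix (Fin (n+1)) (Fin (n+1)) ℝ) with hU
    set ev : Fin (n+1) → ℝ := hBherm.eigenvalues with hev
    have hUo : U ∈ Matrix.orthogonalGroup (Fin (n+1)) ℝ := hBherm.eigenvectorUnitary.2
    have hBe : ∀ i m, B i m = ∑ k, U i k * ev k * U m k := by
      intro i m
      conv_lhs => rw [hBherm.spectral_theorem, Unitary.conjStarAlgAut_apply]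
      rw [Matrix.mul_apply]
      apply Finset.sum_congr rfl
      intro k _
      rw [Matrix.mul_diagonal]
      simp [Matrix.star_apply, hU, hev]
    -- the orthogonal matrices whose first column is the k-th eigenvector
    set h : Fin (n+1) → Matrix (Fin (n+1)) (Fin (n+1)) ℝ :=
      fun k => U * (Equiv.swap (0 : Fin (n+1)) k).permMatrix ℝ with hh
    have hho : ∀ k, h k ∈ Matrix.orthogonalGroup (Fin (n+1)) ℝ :=
      fun k => mul_mem hUo (perm_mem_orth n (Equiv.swap 0 k))
    have hcol : ∀ k i, h k i 0 = U i k := by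
      intro k i
      rw [hh]
      simp only [Matrix.mul_apply, Equiv.Perm.permMatrix, PEquiv.toMatrix_apply,
        Equiv.toPEquiv_apply, Option.mem_def, Option.some.injEq]
      rw [Finset.sum_eq_single k]
      · rw [if_pos (Equiv.swap_apply_right 0 k), mul_one]
      · intro b _ hb
        rw [if_neg, mul_zero]
        intro hcontra
        exact hb ((Equiv.swap 0 k).injective
          (by rw [hcontra, Equiv.swap_apply_right]))
      · simp
    have hdecomp : X = (Matrix.of fun i j => ((X i j).re : ℂ)) +
        ∑ k, Matrix.of (fun i m => (ev k : ℂ) * I * (h k i 0) * (h k m 0)) := by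
      ext i m
      rw [Matrix.add_apply, Matrix.sum_apply]
      have hsum : (∑ k, (Matrix.of (fun i m => (ev k : ℂ) * I * (h k i 0) * (h k m 0))) i m)
          = I * ((B i m : ℝ) : ℂ) := by
        rw [hBe i m]
        push_cast
        rw [Finset.mul_sum]
        apply Finset.sum_congr rfl
        intro k _
        rw [Matrix.of_apply, hcol, hcol]
        ring
      rw [hsum, Matrix.of_apply]
      rw [hB]
      simp only [Matrix.of_apply]
      apply Complex.ext <;> simp
    rw [hdecomp]
    apply Submodule.add_mem
    · apply Submodule.subset_span
      left
      constructor
      · intro i j; simp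
      · ext i j
        simp only [Matrix.transpose_apply, Matrix.neg_apply, Matrix.of_apply]
        rw [hre i j]
        push_cast
        ring
    · apply Submodule.sum_mem
      intro k _
      apply Submodule.subset_span
      right
      exact ⟨h k, hho k, ev k, (orbit_elt_eq n (h k) (hho k) (ev k)).symm⟩
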